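/- Let y ∈ ℝ, and for each nonzero integer d let (a_d, b_d) ∈ ℤ × ℕ satisfy |b_d y - a_d| < 1/|d|, 1 ≤ b_d ≤ |d|, and gcd(a_d, b_d) = 1 (such pairs exist by Dirichlet's theorem). Let ψ: ℕ → [0,1/2) satisfy ψ(q) ≤ 1/q for all q. Suppose integers q, r, d, e satisfy 1 ≤ r < q, 1 ≤ |e| < |d|, gcd(d,e) ≥ 3, and r ≥ 2d². Define Ã(d, ψ(q)) = {x ∈ [0,1) : ∃ p ∈ ℤ, |dx - p - y| < ψ(q), gcd(d, b_d p + a_d) = 1} and A(e, ψ(r)) = {x ∈ [0,1) : ∃ s ∈ ℤ, |ex - s - y| < ψ(r)}. Then Ã(d, ψ(q)) ∩ A(e, ψ(r)) = ∅. -/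

import Mathlib

open Set

theorem stmt5 (y : ℝ) (a : ℤ → ℤ) (b : ℤ → ℕ)
    (hdir : ∀ d : ℤ, d ≠ 0 →
      |(b d : ℝ) * y - (a d : ℝ)| < 1 / |(d : ℝ)| ∧
      1 ≤ b d ∧ (b d : ℤ) ≤ |d| ∧ Int.gcd (a d) (b d) = 1)
    (ψ : ℕ → ℝ) (hψ0 : ∀ q, 0 ≤ ψ q) (hψ1 : ∀ q, ψ q < 1/2)
    (hψ : ∀ q : ℕ, 1 ≤ q → ψ q ≤ 1 / (q : ℝ))
    (q r : ℕ) (d e : ℤ)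
    (hr1 : 1 ≤ r) (hrq : r < q) (he1 : 1 ≤ |e|) (hed : |e| < |d|)
    (hgcd : 3 ≤ Int.gcd d e) (hr2 : 2 * d ^ 2 ≤ (r : ℤ)) :
    {x : ℝ | x ∈ Set.Ico (0:ℝ) 1 ∧
        ∃ p : ℤ, |(d : ℝ) * x - p - y| < ψ q ∧ Int.gcd d ((b d : ℤ) * p + a d) = 1} ∩
      {x : ℝ | x ∈ Set.Ico (0:ℝ) 1 ∧ ∃ s : ℤ, |(e : ℝ) * x - s - y| < ψ r} = ∅ := by
  ext x
  simp only [Set.mem_inter_iff, Set.mem_setOf_eq, Set.mem_empty_iff_false, iff_false]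
  rintro ⟨⟨hx1, p, hp, hcop⟩, hx2, s, hs⟩
  have hdabs : (1:ℤ) < |d| := lt_of_le_of_lt he1 hed
  have hd0 : d ≠ 0 := by
    intro h; rw [h, abs_zero] at hdabs; omega
  have he0 : e ≠ 0 := by
    intro h; rw [h, abs_zero] at he1; omega
  obtain ⟨hdy, hb1, hbd, -⟩ := hdir d hd0
  -- real versions of hypotheses
  have hdR : (0:ℝ) < |(d:ℝ)| := abs_pos.mpr (by exact_mod_cast hd0)
  have heR : (1:ℝ) ≤ |(e:ℝ)| := by exact_mod_cast he1
  have hedR : |(e:ℝ)| < |(d:ℝ)| := by exact_mod_cast hed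
  have hbR : (1:ℝ) ≤ (b d : ℝ) := by exact_mod_cast hb1
  have hbdR : (b d : ℝ) ≤ |(d:ℝ)| := by exact_mod_cast hbd
  have hrR : (1:ℝ) ≤ (r:ℝ) := by exact_mod_cast hr1
  have hqR : (r:ℝ) < (q:ℝ) := by exact_mod_cast hrq
  have hr2R : 2 * |(d:ℝ)|^2 ≤ (r:ℝ) := by
    rw [sq_abs]; exact_mod_cast hr2
  have hq1 : 1 ≤ q := le_trans hr1 (le_of_lt hrq)
  have hψr : ψ r ≤ 1 / (r:ℝ) := hψ r hr1
  have hψq : ψ q ≤ 1 / (q:ℝ) := hψ q hq1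
  have hrpos : (0:ℝ) < (r:ℝ) := by linarith
  have hqpos : (0:ℝ) < (q:ℝ) := by linarith
  -- key bound
  have key1 : |(d:ℝ)| * ψ r + |(e:ℝ)| * ψ q ≤ 1 / |(d:ℝ)| := by
    have h1 : |(d:ℝ)| * ψ r ≤ |(d:ℝ)| / r := by
      rw [div_eq_mul_one_div]
      exact mul_le_mul_of_nonneg_left hψr (le_of_lt hdR)
    have h2 : |(e:ℝ)| * ψ q ≤ |(e:ℝ)| / q := by
      rw [div_eq_mul_one_div]
      exact mul_le_mul_of_nonneg_left hψq (by linarith)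
    have h3 : |(e:ℝ)| / q ≤ |(d:ℝ)| / r := by
      rw [div_le_div_iff₀ hqpos hrpos]
      nlinarith
    have h4 : |(d:ℝ)| / r + |(d:ℝ)| / r ≤ 1 / |(d:ℝ)| := by
      rw [← add_div, div_le_div_iff₀ hrpos hdR]
      nlinarith
    linarith
  -- the integer t
  have ht0 : (b d : ℤ) * (e * p - d * s) - (d - e) * a d = 0 := by
    set t : ℤ := (b d : ℤ) * (e * p - d * s) - (d - e) * a d with htdef
    have htR : (t:ℝ) = (b d : ℝ) * ((d:ℝ) * ((e:ℝ)*x - s - y) - (e:ℝ) * ((d:ℝ)*x - p - y))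
        + ((d:ℝ) - e) * ((b d : ℝ) * y - a d) := by
      rw [htdef]; push_cast; ring
    have hinner : |(d:ℝ) * ((e:ℝ)*x - s - y) - (e:ℝ) * ((d:ℝ)*x - p - y)|
        ≤ |(d:ℝ)| * ψ r + |(e:ℝ)| * ψ q := by
      calc |(d:ℝ) * ((e:ℝ)*x - s - y) - (e:ℝ) * ((d:ℝ)*x - p - y)|
          ≤ |(d:ℝ) * ((e:ℝ)*x - s - y)| + |(e:ℝ) * ((d:ℝ)*x - p - y)| := abs_sub _ _
        _ = |(d:ℝ)| * |(e:ℝ)*x - s - y| + |(e:ℝ)| * |(d:ℝ)*x - p - y| := by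
            rw [abs_mul, abs_mul]
        _ ≤ |(d:ℝ)| * ψ r + |(e:ℝ)| * ψ q := by
            have := mul_le_mul_of_nonneg_left (le_of_lt hs) (le_of_lt hdR)
            have := mul_le_mul_of_nonneg_left (le_of_lt hp) (by linarith : (0:ℝ) ≤ |(e:ℝ)|)
            linarith
    have hfirst : (b d : ℝ) * |(d:ℝ) * ((e:ℝ)*x - s - y) - (e:ℝ) * ((d:ℝ)*x - p - y)| ≤ 1 := by
      have h5 : (b d : ℝ) * |(d:ℝ) * ((e:ℝ)*x - s - y) - (e:ℝ) * ((d:ℝ)*x - p - y)|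
          ≤ (b d : ℝ) * (1 / |(d:ℝ)|) :=
        mul_le_mul_of_nonneg_left (le_trans hinner key1) (by linarith)
      have h6 : (b d : ℝ) * (1 / |(d:ℝ)|) ≤ 1 := by
        rw [mul_one_div, div_le_one hdR]; exact hbdR
      linarith
    have hsecond : |(d:ℝ) - e| * |(b d : ℝ) * y - a d| < 2 := by
      have h7 : |(d:ℝ) - e| ≤ |(d:ℝ)| + |(e:ℝ)| := abs_sub _ _
      have h8 : |(d:ℝ) - e| < 2 * |(d:ℝ)| := by linarith
      have h9 : |(d:ℝ) - e| * |(b d : ℝ) * y - a d| < 2 * |(d:ℝ)| * (1 / |(d:ℝ)|) := by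
        apply mul_lt_mul'' h8 hdy (abs_nonneg _) (abs_nonneg _)
      have h10 : 2 * |(d:ℝ)| * (1 / |(d:ℝ)|) = 2 := by
        field_simp
      linarith
    have habs : |(t:ℝ)| < 3 := by
      calc |(t:ℝ)| ≤ |(b d : ℝ) * ((d:ℝ) * ((e:ℝ)*x - s - y) - (e:ℝ) * ((d:ℝ)*x - p - y))|
            + |((d:ℝ) - e) * ((b d : ℝ) * y - a d)| := by rw [htR]; exact abs_add_le _ _
        _ = (b d : ℝ) * |(d:ℝ) * ((e:ℝ)*x - s - y) - (e:ℝ) * ((d:ℝ)*x - p - y)|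
            + |(d:ℝ) - e| * |(b d : ℝ) * y - a d| := by
            rw [abs_mul, abs_mul, abs_of_nonneg (by linarith : (0:ℝ) ≤ (b d : ℝ))]
        _ < 3 := by linarith
    have htZ : |t| < 3 := by exact_mod_cast (by push_cast [abs_lt] at habs ⊢; exact habs : |(t:ℝ)| < (3:ℝ))
    have hdvd : (Int.gcd d e : ℤ) ∣ t := by
      have h1 : (Int.gcd d e : ℤ) ∣ d := Int.gcd_dvd_left _ _
      have h2 : (Int.gcd d e : ℤ) ∣ e := Int.gcd_dvd_right _ _
      have heq : t = e * ((b d : ℤ) * p + a d) - d * ((b d : ℤ) * s + a d) := by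
        rw [htdef]; ring
      rw [heq]
      exact dvd_sub (h2.mul_right _) (h1.mul_right _)
    by_contra h
    have hle : (Int.gcd d e : ℤ) ≤ |t| :=
      Int.le_of_dvd (abs_pos.mpr h) ((dvd_abs _ _).mpr hdvd)
    have h3 : (3:ℤ) ≤ (Int.gcd d e : ℤ) := by exact_mod_cast hgcd
    omega
  have key : e * ((b d : ℤ) * p + a d) = d * ((b d : ℤ) * s + a d) := by
    linear_combination ht0
  have hdvd2 : d ∣ e * ((b d : ℤ) * p + a d) := ⟨_, key⟩
  have hco : IsCoprime d ((b d : ℤ) * p + a d) := Int.isCoprime_iff_gcd_eq_one.mpr hcop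
  have hde : d ∣ e := hco.dvd_of_dvd_mul_right hdvd2
  have hda : |d| ∣ |e| := (abs_dvd _ _).mpr ((dvd_abs _ _).mpr hde)
  have : |d| ≤ |e| := Int.le_of_dvd (by omega) hda
  omega
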